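/- arXiv:2510.27167 — 4 statements merged into one kernel-verified Lean document; each statement's English description precedes it below -/
import Mathlib

section
/- Let n be a finite index type, let A and M be n×n real matrices, and let f, p, y be vectors in ℝⁿ. Assume: (i) A is invertible and every entry of A⁻¹ is nonnegative; (ii) every entry of M is nonnegative; (iii) Aᵀ p = M y − f; (iv) A y = −M p. If every component of M y − f is nonnegative, then every component of p is nonnegative, every component of y is nonpositive, and f_i ≤ (M y)_i ≤ 0 for every index i. -/
open Matrix

/-- Discrete desired-state bounds (case `y_d ≤ 0`): if the EAFE stiffness matrix `A` is
invertible with entrywise nonnegative inverse, the mass matrix `M` has nonnegative entries,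
`Aᵀ p = M y - f`, `A y = -(M p)`, and every component of `M y - f` is nonnegative, then
`p ≥ 0`, `y ≤ 0`, and `f i ≤ (M y) i ≤ 0` for every `i`. -/
theorem discrete_desired_state_bounds_nonpos {n : Type*} [Fintype n] [DecidableEq n]
    (A M : Matrix n n ℝ) (f p y : n → ℝ)
    (hA : IsUnit A) (hAinv : ∀ i j, 0 ≤ A⁻¹ i j)
    (hM : ∀ i j, 0 ≤ M i j)
    (h1 : Aᵀ *ᵥ p = M *ᵥ y - f)
    (h2 : A *ᵥ y = -(M *ᵥ p))
    (hpos : ∀ i, 0 ≤ (M *ᵥ y - f) i) :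
    (∀ i, 0 ≤ p i) ∧ (∀ i, y i ≤ 0) ∧ (∀ i, f i ≤ (M *ᵥ y) i ∧ (M *ᵥ y) i ≤ 0) := by
  have hdet : IsUnit A.det := (Matrix.isUnit_iff_isUnit_det A).mp hA
  have hdetT : IsUnit Aᵀ.det := by rwa [Matrix.det_transpose]
  -- p = (Aᵀ)⁻¹ *ᵥ (M y - f)
  have hp : p = (Aᵀ)⁻¹ *ᵥ (M *ᵥ y - f) := by
    rw [← h1, Matrix.mulVec_mulVec, Matrix.nonsing_inv_mul _ hdetT, Matrix.one_mulVec]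
  have hATinv : ∀ i j, 0 ≤ (Aᵀ)⁻¹ i j := by
    intro i j
    rw [← Matrix.transpose_nonsing_inv]
    exact hAinv j i
  have hpnn : ∀ i, 0 ≤ p i := by
    intro i
    rw [hp]
    exact Finset.sum_nonneg fun j _ => mul_nonneg (hATinv i j) (hpos j)
  have hMp : ∀ i, 0 ≤ (M *ᵥ p) i := fun i =>
    Finset.sum_nonneg fun j _ => mul_nonneg (hM i j) (hpnn j)
  have hy : y = A⁻¹ *ᵥ (-(M *ᵥ p)) := by
    rw [← h2, Matrix.mulVec_mulVec, Matrix.nonsing_inv_mul _ hdet, Matrix.one_mulVec]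
  have hynp : ∀ i, y i ≤ 0 := by
    intro i
    rw [hy]
    refine Finset.sum_nonpos fun j _ => ?_
    exact mul_nonpos_of_nonneg_of_nonpos (hAinv i j) (by simpa using neg_nonpos_of_nonneg (hMp j))
  refine ⟨hpnn, hynp, fun i => ⟨by have := hpos i; simp [Pi.sub_apply] at this; linarith, ?_⟩⟩
  exact Finset.sum_nonpos fun j _ => mul_nonpos_of_nonneg_of_nonpos (hM i j) (hynp j)
end

section
/- Let n be a finite index type, let A and M be n×n real matrices, and let f, p, y be vectors in ℝⁿ. Assume: (i) A is invertible and every entry of A⁻¹ is nonnegative; (ii) every entry of M is nonnegative; (iii) Aᵀ p = M y − f; (iv) A y = −M p. If every component of M y − f is nonpositive, then every component of p is nonpositive, every component of y is nonnegative, and 0 ≤ (M y)_i ≤ f_i for every index i. -/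
open Matrix

/-- Discrete desired-state bounds (case `y_d ≥ 0`): if the EAFE stiffness matrix `A` is
invertible with entrywise nonnegative inverse, the mass matrix `M` has nonnegative entries,
`Aᵀ p = M y - f`, `A y = -(M p)`, and every component of `M y - f` is nonpositive, then
`p ≤ 0`, `y ≥ 0`, and `0 ≤ (M y) i ≤ f i` for every `i`. -/
theorem discrete_desired_state_bounds_nonneg {n : Type*} [Fintype n] [DecidableEq n]
    (A M : Matrix n n ℝ) (f p y : n → ℝ)
    (hA : IsUnit A) (hAinv : ∀ i j, 0 ≤ A⁻¹ i j)
    (hM : ∀ i j, 0 ≤ M i j)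
    (h1 : Aᵀ *ᵥ p = M *ᵥ y - f)
    (h2 : A *ᵥ y = -(M *ᵥ p))
    (hneg : ∀ i, (M *ᵥ y - f) i ≤ 0) :
    (∀ i, p i ≤ 0) ∧ (∀ i, 0 ≤ y i) ∧ (∀ i, 0 ≤ (M *ᵥ y) i ∧ (M *ᵥ y) i ≤ f i) := by
  have hAdet : IsUnit A.det := (Matrix.isUnit_iff_isUnit_det A).mp hA
  have hp : ∀ i, p i ≤ 0 := by
    have hpe : p = Aᵀ⁻¹ *ᵥ (M *ᵥ y - f) := by
      rw [← h1, Matrix.mulVec_mulVec, Matrix.nonsing_inv_mul _ (by simpa using hAdet),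
        Matrix.one_mulVec]
    intro i
    rw [hpe]
    apply Finset.sum_nonpos
    intro j _
    have h1 : 0 ≤ Aᵀ⁻¹ i j := by
      rw [← Matrix.transpose_nonsing_inv]
      exact hAinv j i
    exact mul_nonpos_of_nonneg_of_nonpos h1 (hneg j)
  have hy : ∀ i, 0 ≤ y i := by
    have hye : y = A⁻¹ *ᵥ (-(M *ᵥ p)) := by
      rw [← h2, Matrix.mulVec_mulVec, Matrix.nonsing_inv_mul _ hAdet, Matrix.one_mulVec]
    intro i
    rw [hye]
    apply Finset.sum_nonneg
    intro j _
    apply mul_nonneg (hAinv i j)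
    simp only [Pi.neg_apply, neg_nonneg, Matrix.mulVec, dotProduct]
    exact Finset.sum_nonpos fun k _ => mul_nonpos_of_nonneg_of_nonpos (hM j k) (hp k)
  refine ⟨hp, hy, fun i => ⟨?_, ?_⟩⟩
  · exact Finset.sum_nonneg fun j _ => mul_nonneg (hM i j) (hy j)
  · have := hneg i
    simpa [sub_nonpos] using this
end

section
/- Let x_i, x_j ∈ ℝ² and set τ = x_j − x_i and c(t) = x_i + t·τ for t ∈ [0,1]. Let ε : ℝ² → ℝ, ζ : ℝ² → ℝ², and ψ, y : ℝ² → ℝ be such that: ε is continuous and strictly positive on the segment c([0,1]); ζ is continuous on the segment; ψ and y are differentiable at every point of the segment with gradients continuous along the segment; and for every t ∈ [0,1], ∇ψ(c(t)) · τ = ε(c(t))⁻¹ (ζ(c(t)) · τ). Then ∫₀¹ ε(c(t))⁻¹ e^{ψ(c(t))} (ε(c(t)) ∇y(c(t)) + ζ(c(t)) y(c(t))) · τ dt = e^{ψ(x_j)} y(x_j) − e^{ψ(x_i)} y(x_i). -/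
open scoped RealInnerProductSpace

theorem fderiv_apply_eq_inner_gradient {f : EuclideanSpace ℝ (Fin 2) → ℝ}
    {x v : EuclideanSpace ℝ (Fin 2)} :
    fderiv ℝ f x v = ⟪gradient f x, v⟫ := by
  rw [gradient, InnerProductSpace.toDual_symm_apply]

/-- Edge degree-of-freedom identity of the EAFE scheme: along the segment `c(t) = xᵢ + t τ`
with `τ = xⱼ - xᵢ`, if the edgewise potential `ψ` satisfies `∇ψ·τ = ε⁻¹ (ζ·τ)` on the
segment, then the edge average of `κ⁻¹ J(y)·τ` (with `κ = ε e^{-ψ}` and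
`J(y) = ε ∇y + ζ y`) equals `(e^{ψ} y)(xⱼ) - (e^{ψ} y)(xᵢ)`. -/
theorem eafe_edge_dof_identity
    (xi xj : EuclideanSpace ℝ (Fin 2))
    (τ : EuclideanSpace ℝ (Fin 2)) (hτ : τ = xj - xi)
    (c : ℝ → EuclideanSpace ℝ (Fin 2)) (hc : ∀ t, c t = xi + t • τ)
    (ε : EuclideanSpace ℝ (Fin 2) → ℝ)
    (ζ : EuclideanSpace ℝ (Fin 2) → EuclideanSpace ℝ (Fin 2))
    (ψ y : EuclideanSpace ℝ (Fin 2) → ℝ)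
    (hεcont : ContinuousOn (fun t => ε (c t)) (Set.Icc 0 1))
    (hεpos : ∀ t ∈ Set.Icc (0:ℝ) 1, 0 < ε (c t))
    (hζcont : ContinuousOn (fun t => ζ (c t)) (Set.Icc 0 1))
    (hψdiff : ∀ t ∈ Set.Icc (0:ℝ) 1, DifferentiableAt ℝ ψ (c t))
    (hydiff : ∀ t ∈ Set.Icc (0:ℝ) 1, DifferentiableAt ℝ y (c t))
    (hψgrad : ContinuousOn (fun t => gradient ψ (c t)) (Set.Icc 0 1))
    (hygrad : ContinuousOn (fun t => gradient y (c t)) (Set.Icc 0 1))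
    (hrel : ∀ t ∈ Set.Icc (0:ℝ) 1,
      ⟪gradient ψ (c t), τ⟫ = (ε (c t))⁻¹ * ⟪ζ (c t), τ⟫) :
    ∫ t in (0:ℝ)..1,
        (ε (c t))⁻¹ * Real.exp (ψ (c t)) *
          ⟪ε (c t) • gradient y (c t) + y (c t) • ζ (c t), τ⟫
      = Real.exp (ψ xj) * y xj - Real.exp (ψ xi) * y xi := by
  -- the curve has derivative τ
  have hcder : ∀ t : ℝ, HasDerivAt c τ t := by
    intro t
    have : HasDerivAt (fun t : ℝ => xi + t • τ) ((1:ℝ) • τ) t :=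
      ((hasDerivAt_id t).smul_const τ).const_add xi
    simpa [funext hc] using this
  -- composite derivatives
  have hψc : ∀ t ∈ Set.Icc (0:ℝ) 1,
      HasDerivAt (fun t => ψ (c t)) ⟪gradient ψ (c t), τ⟫ t := by
    intro t ht
    have := ((hψdiff t ht).hasFDerivAt).comp_hasDerivAt t (hcder t)
    rw [fderiv_apply_eq_inner_gradient] at this
    exact this
  have hyc : ∀ t ∈ Set.Icc (0:ℝ) 1,
      HasDerivAt (fun t => y (c t)) ⟪gradient y (c t), τ⟫ t := by
    intro t ht
    have := ((hydiff t ht).hasFDerivAt).comp_hasDerivAt t (hcder t)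
    rw [fderiv_apply_eq_inner_gradient] at this
    exact this
  set g : ℝ → ℝ := fun t => Real.exp (ψ (c t)) * y (c t) with hg
  set f : ℝ → ℝ := fun t =>
    (ε (c t))⁻¹ * Real.exp (ψ (c t)) *
      ⟪ε (c t) • gradient y (c t) + y (c t) • ζ (c t), τ⟫ with hf
  have hgder : ∀ t ∈ Set.Icc (0:ℝ) 1, HasDerivAt g (f t) t := by
    intro t ht
    have hexp : HasDerivAt (fun t => Real.exp (ψ (c t)))
        (Real.exp (ψ (c t)) * ⟪gradient ψ (c t), τ⟫) t :=
      (hψc t ht).exp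
    have := hexp.mul (hyc t ht)
    have hεne : ε (c t) ≠ 0 := (hεpos t ht).ne'
    have hfeq : f t = Real.exp (ψ (c t)) * ⟪gradient ψ (c t), τ⟫ * y (c t) +
        Real.exp (ψ (c t)) * ⟪gradient y (c t), τ⟫ := by
      simp only [hf, hrel t ht, inner_add_left, real_inner_smul_left]
      field_simp
      ring
    rw [hfeq]
    exact this
  have hint : IntervalIntegrable f MeasureTheory.volume 0 1 := by
    apply ContinuousOn.intervalIntegrable
    rw [Set.uIcc_of_le (by norm_num : (0:ℝ) ≤ 1)]
    have hccont : Continuous c := by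
      have : Continuous fun t : ℝ => xi + t • τ :=
        continuous_const.add (continuous_id.smul continuous_const)
      simpa [funext hc] using this
    have hψcont : ContinuousOn (fun t => ψ (c t)) (Set.Icc 0 1) :=
      fun t ht => ((hψdiff t ht).continuousAt.comp hccont.continuousAt).continuousWithinAt
    have hycont : ContinuousOn (fun t => y (c t)) (Set.Icc 0 1) :=
      fun t ht => ((hydiff t ht).continuousAt.comp hccont.continuousAt).continuousWithinAt
    exact ((hεcont.inv₀ (fun t ht => (hεpos t ht).ne')).mul
      (Real.continuous_exp.comp_continuousOn hψcont)).mul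
      (((hεcont.smul hygrad).add (hycont.smul hζcont)).inner continuousOn_const)
  have := intervalIntegral.integral_eq_sub_of_hasDerivAt
    (fun t ht => hgder t (by rwa [Set.uIcc_of_le (by norm_num : (0:ℝ) ≤ 1)] at ht)) hint
  rw [this]
  have h0 : c 0 = xi := by simp [hc]
  have h1 : c 1 = xj := by simp [hc, hτ]
  simp [hg, h0, h1]
end

section
/- Let V be a real normed vector space and let V_h be a linear subspace of V. Let a, a_h, m : V × V → ℝ be bilinear forms with m symmetric, and let α > 0, C_a ≥ 0, κ ≥ 0, δ₁ ≥ 0, δ₀ ≥ 0 be constants such that: (i) a_h(v,v) ≥ α‖v‖² and m(v,v) ≥ 0 for all v ∈ V_h; (ii) |a(u,v)| ≤ C_a‖u‖‖v‖ for all u,v ∈ V; (iii) |a_h(u,v) − a(u,v)| ≤ κ‖u‖‖v‖ for all u,v ∈ V_h. Define B((p,y),(q,z)) := a(q,p) − m(y,q) − m(p,z) − a(y,z) and B_h((p,y),(q,z)) := a_h(q,p) − m(y,q) − m(p,z) − a_h(y,z). Let F : V × V → ℝ be linear, let (p̄, ȳ) ∈ V × V satisfy B((p̄,ȳ),(q,z))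 = F(q,z) for all (q,z) ∈ V_h × V_h, and let (p̄_h, ȳ_h) ∈ V_h × V_h satisfy B_h((p̄_h,ȳ_h),(q,z)) = F(q,z) for all (q,z) ∈ V_h × V_h. Let Πp̄, Πȳ ∈ V_h satisfy ‖p̄ − Πp̄‖ ≤ δ₁, ‖ȳ − Πȳ‖ ≤ δ₁, and |m(p̄ − Πp̄, z)| ≤ δ₀‖z‖ and |m(ȳ − Πȳ, q)| ≤ δ₀‖q‖ for all q, z ∈ V_h. Then ‖Πp̄ − p̄_h‖ + ‖Πȳ − ȳ_h‖ ≤ (4/α)(κ(‖Πp̄‖ + ‖Πȳ‖) + C_a δ₁ + δ₀). -/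
set_option maxHeartbeats 1000000 in
/-- Abstract form of the error estimate of Theorem 4.2: with `a_h` coercive on the subspace
`V_h`, `m` symmetric positive semidefinite on `V_h`, `a` bounded, `a_h` consistent with `a`
on `V_h`, exact solution `(p̄, ȳ)` of the saddle-point problem `B = F`, discrete solution
`(p̄_h, ȳ_h)` of `B_h = F` on `V_h × V_h`, and interpolants `Πp̄, Πȳ ∈ V_h` with `H¹` error
`δ₁` and `L²`-residual error `δ₀`, one has
`‖Πp̄ - p̄_h‖ + ‖Πȳ - ȳ_h‖ ≤ (4/α)(κ(‖Πp̄‖ + ‖Πȳ‖) + C_a δ₁ + δ₀)`. -/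
theorem abstract_error_estimate {V : Type*} [NormedAddCommGroup V] [NormedSpace ℝ V]
    (Vh : Submodule ℝ V)
    (a ah m : V →ₗ[ℝ] V →ₗ[ℝ] ℝ) (hm : ∀ u v, m u v = m v u)
    (α Ca κ δ₁ δ₀ : ℝ)
    (hα : 0 < α) (hCa : 0 ≤ Ca) (hκ : 0 ≤ κ) (hδ₁ : 0 ≤ δ₁) (hδ₀ : 0 ≤ δ₀)
    (hcoer : ∀ v ∈ Vh, α * ‖v‖^2 ≤ ah v v)
    (hpsd : ∀ v ∈ Vh, 0 ≤ m v v)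
    (hbdd : ∀ u v : V, |a u v| ≤ Ca * ‖u‖ * ‖v‖)
    (hcons : ∀ u ∈ Vh, ∀ v ∈ Vh, |ah u v - a u v| ≤ κ * ‖u‖ * ‖v‖)
    (B Bh : V × V → V × V → ℝ)
    (hB : ∀ p y q z, B (p, y) (q, z) = a q p - m y q - m p z - a y z)
    (hBh : ∀ p y q z, Bh (p, y) (q, z) = ah q p - m y q - m p z - ah y z)
    (F : (V × V) →ₗ[ℝ] ℝ)
    (pbar ybar : V)
    (hexact : ∀ q ∈ Vh, ∀ z ∈ Vh, B (pbar, ybar) (q, z) = F (q, z))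
    (ph yh : V) (hphVh : ph ∈ Vh) (hyhVh : yh ∈ Vh)
    (hdisc : ∀ q ∈ Vh, ∀ z ∈ Vh, Bh (ph, yh) (q, z) = F (q, z))
    (Pp Py : V) (hPpVh : Pp ∈ Vh) (hPyVh : Py ∈ Vh)
    (hPp : ‖pbar - Pp‖ ≤ δ₁) (hPy : ‖ybar - Py‖ ≤ δ₁)
    (hmp : ∀ z ∈ Vh, |m (pbar - Pp) z| ≤ δ₀ * ‖z‖)
    (hmy : ∀ q ∈ Vh, |m (ybar - Py) q| ≤ δ₀ * ‖q‖) :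
    ‖Pp - ph‖ + ‖Py - yh‖ ≤ (4 / α) * (κ * (‖Pp‖ + ‖Py‖) + Ca * δ₁ + δ₀) := by
  set ep := Pp - ph with hep_def
  set ey := Py - yh with hey_def
  have hepVh : ep ∈ Vh := Vh.sub_mem hPpVh hphVh
  have heyVh : ey ∈ Vh := Vh.sub_mem hPyVh hyhVh
  have hneyVh : -ey ∈ Vh := Vh.neg_mem heyVh
  -- equation from exact and discrete problems tested with (ep, -ey)
  have heq : ah ep ph - m yh ep - m ph (-ey) - ah yh (-ey)
      = a ep pbar - m ybar ep - m pbar (-ey) - a ybar (-ey) := by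
    have h1 := hdisc ep hepVh (-ey) hneyVh
    have h2 := hexact ep hepVh (-ey) hneyVh
    rw [hBh] at h1; rw [hB] at h2
    rw [h1, h2]
  -- key energy identity
  have key : ah ep ep + ah ey ey
      = (ah ep Pp - a ep Pp) + a ep (Pp - pbar) + m (ybar - Py) ep
        + m (pbar - Pp) (-ey) - (ah Py (-ey) - a Py (-ey)) + a (ybar - Py) (-ey) := by
    have hsym : m ey ep = m ep ey := hm ey ep
    simp only [hep_def, hey_def, map_sub, map_neg, LinearMap.sub_apply,
      LinearMap.neg_apply] at heq hsym ⊢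
    linarith [heq, hsym]
  -- coercivity lower bound
  have hlow : α * ‖ep‖^2 + α * ‖ey‖^2 ≤ ah ep ep + ah ey ey :=
    add_le_add (hcoer ep hepVh) (hcoer ey heyVh)
  -- six upper bounds
  have b1 : |ah ep Pp - a ep Pp| ≤ κ * ‖ep‖ * ‖Pp‖ := hcons ep hepVh Pp hPpVh
  have b2 : |a ep (Pp - pbar)| ≤ Ca * ‖ep‖ * δ₁ := by
    calc |a ep (Pp - pbar)| ≤ Ca * ‖ep‖ * ‖Pp - pbar‖ := hbdd ep (Pp - pbar)
      _ ≤ Ca * ‖ep‖ * δ₁ := by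
          have : ‖Pp - pbar‖ ≤ δ₁ := by rwa [norm_sub_rev]
          exact mul_le_mul_of_nonneg_left this (by positivity)
  have b3 : |m (ybar - Py) ep| ≤ δ₀ * ‖ep‖ := hmy ep hepVh
  have b4 : |m (pbar - Pp) (-ey)| ≤ δ₀ * ‖ey‖ := by
    have := hmp (-ey) hneyVh
    rwa [norm_neg] at this
  have b5 : |ah Py (-ey) - a Py (-ey)| ≤ κ * ‖Py‖ * ‖ey‖ := by
    have := hcons Py hPyVh (-ey) hneyVh
    rwa [norm_neg] at this
  have b6 : |a (ybar - Py) (-ey)| ≤ Ca * δ₁ * ‖ey‖ := by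
    calc |a (ybar - Py) (-ey)| ≤ Ca * ‖ybar - Py‖ * ‖-ey‖ := hbdd _ _
      _ ≤ Ca * δ₁ * ‖ey‖ := by
          rw [norm_neg]
          exact mul_le_mul_of_nonneg_right (mul_le_mul_of_nonneg_left hPy hCa) (norm_nonneg _)
  set M := κ * (‖Pp‖ + ‖Py‖) + Ca * δ₁ + δ₀ with hM_def
  have hM : 0 ≤ M := by positivity
  have hS : 0 ≤ ‖ep‖ + ‖ey‖ := by positivity
  have hup : ah ep ep + ah ey ey ≤ M * (‖ep‖ + ‖ey‖) := by
    have a1 := (abs_le.mp b1).2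
    have a2 := (abs_le.mp b2).2
    have a3 := (abs_le.mp b3).2
    have a4 := (abs_le.mp b4).2
    have a5 := (abs_le.mp b5).1
    have a6 := (abs_le.mp b6).2
    have e1 : (κ * ‖Pp‖ + Ca * δ₁ + δ₀) * ‖ep‖
        = κ * ‖ep‖ * ‖Pp‖ + Ca * ‖ep‖ * δ₁ + δ₀ * ‖ep‖ := by ring
    have e2 : (κ * ‖Py‖ + Ca * δ₁ + δ₀) * ‖ey‖
        = κ * ‖Py‖ * ‖ey‖ + Ca * δ₁ * ‖ey‖ + δ₀ * ‖ey‖ := by ring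
    have step : ah ep ep + ah ey ey
        ≤ (κ * ‖Pp‖ + Ca * δ₁ + δ₀) * ‖ep‖ + (κ * ‖Py‖ + Ca * δ₁ + δ₀) * ‖ey‖ := by
      rw [key, e1, e2]; linarith
    have slack : (κ * ‖Pp‖ + Ca * δ₁ + δ₀) * ‖ep‖ + (κ * ‖Py‖ + Ca * δ₁ + δ₀) * ‖ey‖
        ≤ M * (‖ep‖ + ‖ey‖) := by
      have h1 : 0 ≤ κ * ‖Py‖ * ‖ep‖ := by positivity
      have h2 : 0 ≤ κ * ‖Pp‖ * ‖ey‖ := by positivity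
      rw [hM_def]; nlinarith
    linarith
  have hmain : α * (‖ep‖^2 + ‖ey‖^2) ≤ M * (‖ep‖ + ‖ey‖) := by nlinarith
  have hfinal : ‖ep‖ + ‖ey‖ ≤ (4 / α) * M := by
    rcases eq_or_lt_of_le hS with h0 | h0
    · rw [← h0]; positivity
    · have hsq : (‖ep‖ + ‖ey‖)^2 ≤ 2 * (‖ep‖^2 + ‖ey‖^2) := by nlinarith [sq_nonneg (‖ep‖ - ‖ey‖)]
      have : α * (‖ep‖ + ‖ey‖)^2 ≤ 2 * (M * (‖ep‖ + ‖ey‖)) := by nlinarith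
      have hle : α * (‖ep‖ + ‖ey‖) ≤ 2 * M := by
        have := (mul_le_mul_iff_of_pos_right h0).mp (by nlinarith : α * (‖ep‖ + ‖ey‖) * (‖ep‖ + ‖ey‖) ≤ 2 * M * (‖ep‖ + ‖ey‖))
        linarith
      rw [div_mul_eq_mul_div, le_div_iff₀ hα]
      nlinarith
  exact hfinal
end
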